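/- Let c > 1, set q := c/(c+1), let δ > 0, a ≥ 0, and let G : ℝ → ℝ be nonnegative and integrable on (0, δ]. Suppose that for every k ∈ ℕ, the integral of G over (q^{k+1}·δ, q^k·δ] equals q^k·(1−q)·δ·a. Then for every ū ∈ (0, δ], (1 − 1/c)·ū·a ≤ ∫ over (0, ū] of G ≤ (1 + 1/c)·ū·a. -/

import Mathlib

open MeasureTheory

/-- Remark B.1 of the paper: for any large constant `c`, initial data with
`∫₀^ū |χ̂₀|² = f·ū·a` and `1 − 1/c ≤ f ≤ 1 + 1/c` via `q = c/(c+1)`. -/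
theorem stmt_4 (c δ a : ℝ) (hc : 1 < c) (hδ : 0 < δ) (ha : 0 ≤ a)
    (G : ℝ → ℝ) (hGnn : ∀ x, 0 ≤ G x)
    (hGint : IntegrableOn G (Set.Ioc 0 δ))
    (hpiece : ∀ k : ℕ,
      ∫ x in Set.Ioc ((c/(c+1))^(k+1) * δ) ((c/(c+1))^k * δ), G x
        = (c/(c+1))^k * (1 - c/(c+1)) * δ * a) :
    ∀ ub : ℝ, ub ∈ Set.Ioc (0:ℝ) δ →
      (1 - 1/c) * ub * a ≤ ∫ x in Set.Ioc (0:ℝ) ub, G x ∧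
      (∫ x in Set.Ioc (0:ℝ) ub, G x) ≤ (1 + 1/c) * ub * a := by
  set q : ℝ := c / (c + 1) with hq
  have hc0 : (0:ℝ) < c := lt_trans one_pos hc
  have hc1 : (0:ℝ) < c + 1 := by linarith
  have hq0 : 0 < q := div_pos hc0 hc1
  have hq1 : q < 1 := (div_lt_one hc1).2 (by linarith)
  -- the integral over (0, q^k δ]
  set I : ℕ → ℝ := fun k => ∫ x in Set.Ioc (0:ℝ) (q ^ k * δ), G x with hI
  have hqk_pos : ∀ k : ℕ, 0 < q ^ k * δ := fun k => mul_pos (pow_pos hq0 k) hδ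
  have hqk_le : ∀ k : ℕ, q ^ k * δ ≤ δ := fun k => by
    have : q ^ k ≤ 1 := pow_le_one₀ hq0.le hq1.le
    nlinarith
  have hsub : ∀ k : ℕ, Set.Ioc (0:ℝ) (q ^ k * δ) ⊆ Set.Ioc 0 δ := fun k =>
    Set.Ioc_subset_Ioc le_rfl (hqk_le k)
  have hintk : ∀ k : ℕ, IntegrableOn G (Set.Ioc (0:ℝ) (q ^ k * δ)) :=
    fun k => hGint.mono_set (hsub k)
  have hstep : ∀ k : ℕ, I k = I (k + 1) + q ^ k * (1 - q) * δ * a := by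
    intro k
    have hle : q ^ (k + 1) * δ ≤ q ^ k * δ := by
      have : q ^ (k + 1) ≤ q ^ k := pow_le_pow_of_le_one hq0.le hq1.le (by omega)
      nlinarith
    have hun : Set.Ioc (0:ℝ) (q ^ (k+1) * δ) ∪ Set.Ioc (q ^ (k+1) * δ) (q ^ k * δ)
        = Set.Ioc 0 (q ^ k * δ) := Set.Ioc_union_Ioc_eq_Ioc (hqk_pos (k+1)).le hle
    have hdisj : Disjoint (Set.Ioc (0:ℝ) (q ^ (k+1) * δ))
        (Set.Ioc (q ^ (k+1) * δ) (q ^ k * δ)) := Set.Ioc_disjoint_Ioc_of_le le_rfl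
    have := setIntegral_union hdisj measurableSet_Ioc (hintk (k+1))
      ((hintk k).mono_set (Set.Ioc_subset_Ioc (hqk_pos (k+1)).le le_rfl)) (f := G) (μ := volume)
    rw [hun] at this
    rw [hI]
    simp only
    rw [this, hpiece k]
  have hconst : ∀ k : ℕ, I k - q ^ k * δ * a = I 0 - q ^ 0 * δ * a := by
    intro k
    induction k with
    | zero => rfl
    | succ n ih =>
      rw [← ih, hstep n]; ring
  -- limits
  have hq_tend : Filter.Tendsto (fun k : ℕ => q ^ k * δ * a) Filter.atTop (nhds 0) := by
    have := tendsto_pow_atTop_nhds_zero_of_lt_one hq0.le hq1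
    simpa using (this.mul_const δ).mul_const a
  have hI_tend : Filter.Tendsto I Filter.atTop (nhds 0) := by
    have hanti : Antitone fun k : ℕ => Set.Ioc (0:ℝ) (q ^ k * δ) := by
      intro m n hmn
      exact Set.Ioc_subset_Ioc le_rfl
        (by nlinarith [pow_le_pow_of_le_one hq0.le hq1.le hmn])
    have h0 : (⋂ n : ℕ, Set.Ioc (0:ℝ) (q ^ n * δ)) = ∅ := by
      ext x
      simp only [Set.mem_iInter, Set.mem_Ioc, Set.mem_empty_iff_false, iff_false, not_forall]
      by_contra h
      push_neg at h
      obtain ⟨hx0, -⟩ := h 0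
      have := tendsto_pow_atTop_nhds_zero_of_lt_one hq0.le hq1
      obtain ⟨n, hn⟩ := (Filter.Tendsto.eventually_lt_const
        (show (0:ℝ) < x / δ from div_pos hx0 hδ) this).exists
      have : q ^ n * δ < x := by
        have := (lt_div_iff₀ hδ).mp hn; linarith
      exact absurd (h n).2 (not_le.2 this)
    have := tendsto_setIntegral_of_antitone (f := G) (μ := volume)
      (fun k => measurableSet_Ioc) hanti ⟨0, hintk 0⟩
    rw [h0] at this
    simpa using this
  have hE : I 0 - q ^ 0 * δ * a = 0 := by
    have : Filter.Tendsto (fun k : ℕ => I k - q ^ k * δ * a) Filter.atTop (nhds 0) := by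
      simpa using hI_tend.sub hq_tend
    have hconst' : (fun k : ℕ => I k - q ^ k * δ * a) = fun _ => I 0 - q ^ 0 * δ * a := by
      funext k; exact hconst k
    rw [hconst'] at this
    exact tendsto_const_nhds_iff.mp this
  have hIk : ∀ k : ℕ, I k = q ^ k * δ * a := by
    intro k
    have := hconst k
    rw [hE] at this; linarith
  -- main argument
  intro ub hub
  obtain ⟨hub0, hubδ⟩ := hub
  have hex : ∃ n : ℕ, q ^ n * δ < ub := by
    have := tendsto_pow_atTop_nhds_zero_of_lt_one hq0.le hq1
    obtain ⟨n, hn⟩ := (Filter.Tendsto.eventually_lt_const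
      (show (0:ℝ) < ub / δ from div_pos hub0 hδ) this).exists
    exact ⟨n, by have := (lt_div_iff₀ hδ).mp hn; linarith⟩
  classical
  set n := Nat.find hex with hn
  have hn_spec : q ^ n * δ < ub := Nat.find_spec hex
  have hn_ne : n ≠ 0 := by
    intro h
    have := hn_spec
    rw [h] at this
    simp at this
    linarith
  obtain ⟨k, hk⟩ : ∃ k, n = k + 1 := ⟨n - 1, (Nat.succ_pred_eq_of_ne_zero hn_ne).symm⟩
  have hk_le : ub ≤ q ^ k * δ := by
    have := Nat.find_min hex (m := k) (by omega)
    push_neg at this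
    exact this
  have hk1_lt : q ^ (k + 1) * δ < ub := by rw [← hk]; exact hn_spec
  have hGnn_ae : (0:ℝ → ℝ) ≤ᵐ[volume.restrict (Set.Ioc (0:ℝ) (q ^ k * δ))] G :=
    Filter.Eventually.of_forall hGnn
  have hmono1 : (∫ x in Set.Ioc (0:ℝ) (q^(k+1) * δ), G x) ≤ ∫ x in Set.Ioc (0:ℝ) ub, G x := by
    apply setIntegral_mono_set (hGint.mono_set (Set.Ioc_subset_Ioc le_rfl hubδ))
      (Filter.Eventually.of_forall hGnn)
    exact Filter.Eventually.of_forall (Set.Ioc_subset_Ioc le_rfl hk1_lt.le)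
  have hmono2 : (∫ x in Set.Ioc (0:ℝ) ub, G x) ≤ ∫ x in Set.Ioc (0:ℝ) (q^k * δ), G x := by
    apply setIntegral_mono_set (hintk k) (Filter.Eventually.of_forall hGnn)
    exact Filter.Eventually.of_forall (Set.Ioc_subset_Ioc le_rfl hk_le)
  have e1 : (∫ x in Set.Ioc (0:ℝ) (q^(k+1) * δ), G x) = q ^ (k+1) * δ * a := hIk (k+1)
  have e2 : (∫ x in Set.Ioc (0:ℝ) (q^k * δ), G x) = q ^ k * δ * a := hIk k
  rw [e1] at hmono1
  rw [e2] at hmono2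
  constructor
  · -- lower bound
    have h1 : (1 - 1/c) * ub ≤ q ^ (k+1) * δ := by
      have hq_ge : 1 - 1/c ≤ q := by
        have h1 : 1 - 1/c = (c-1)/c := by field_simp
        rw [hq, h1, div_le_div_iff₀ hc0 hc1]
        nlinarith
      calc (1 - 1/c) * ub ≤ q * ub := by nlinarith
        _ ≤ q * (q ^ k * δ) := by nlinarith
        _ = q ^ (k+1) * δ := by ring
    calc (1 - 1/c) * ub * a ≤ q ^ (k+1) * δ * a := by nlinarith
      _ ≤ _ := hmono1
  · -- upper bound
    have h2 : q ^ k * δ ≤ (1 + 1/c) * ub := by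
      have hqinv : q ^ k * δ = (1/q) * (q ^ (k+1) * δ) := by
        field_simp; ring
      have hinv : (1/q : ℝ) = 1 + 1/c := by
        rw [hq]; field_simp
      rw [hqinv, hinv]
      have : (0:ℝ) < 1 + 1/c := by positivity
      nlinarith
    calc (∫ x in Set.Ioc (0:ℝ) ub, G x) ≤ q ^ k * δ * a := hmono2
      _ ≤ (1 + 1/c) * ub * a := by nlinarith
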